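/- Let U, C, M, Q be n×n complex matrices with U unitary, and suppose that U·conj(C)·U† = −C, U·conj(M)·U† = M†, and U·conj(Q)·U† = Q, where conj denotes entrywise complex conjugation. Define Ξ = ((I + C)/2)·M·Q·M†·Q + ((I − C)/2)·M†·Q·M·Q. Then U·conj(Ξ)·U† = Ξ. -/
import Mathlib


open Matrix

/-- The entrywise complex conjugate of a matrix. -/
noncomputable def mconj {n : ℕ} (A : Matrix (Fin n) (Fin n) ℂ) : Matrix (Fin n) (Fin n) ℂ :=
  A.map (starRingEnd ℂ)

lemma mconj_mul {n : ℕ} (A B : Matrix (Fin n) (Fin n) ℂ) :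
    mconj (A * B) = mconj A * mconj B := by
  simp [mconj, Matrix.map_mul]

lemma mconj_add {n : ℕ} (A B : Matrix (Fin n) (Fin n) ℂ) :
    mconj (A + B) = mconj A + mconj B := by
  simp [mconj, Matrix.map_add]

lemma mconj_one {n : ℕ} : mconj (1 : Matrix (Fin n) (Fin n) ℂ) = 1 := by
  simp [mconj]

lemma mconj_smul {n : ℕ} (c : ℂ) (A : Matrix (Fin n) (Fin n) ℂ) :
    mconj (c • A) = (starRingEnd ℂ c) • mconj A := by
  ext i j
  simp [mconj]

lemma mconj_conjTranspose {n : ℕ} (A : Matrix (Fin n) (Fin n) ℂ) :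
    mconj (Aᴴ) = (mconj A)ᴴ := by
  ext i j
  simp [mconj, Matrix.conjTranspose_apply]

/-- time-reversal symmetry of Ξ. -/
theorem stmt0 {n : ℕ} (U C M Q Ξ : Matrix (Fin n) (Fin n) ℂ)
    (hU : U ∈ Matrix.unitaryGroup (Fin n) ℂ)
    (hC : U * mconj C * Uᴴ = -C)
    (hM : U * mconj M * Uᴴ = Mᴴ)
    (hQ : U * mconj Q * Uᴴ = Q)
    (hΞ : Ξ = ((2 : ℂ)⁻¹ • ((1 : Matrix (Fin n) (Fin n) ℂ) + C)) * (M * Q * Mᴴ * Q)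
        + ((2 : ℂ)⁻¹ • ((1 : Matrix (Fin n) (Fin n) ℂ) - C)) * (Mᴴ * Q * M * Q)) :
    U * mconj Ξ * Uᴴ = Ξ := by
  have h1 : Uᴴ * U = 1 := by
    have := hU.1
    simpa [Matrix.star_eq_conjTranspose] using this
  have hmul : ∀ X Y : Matrix (Fin n) (Fin n) ℂ,
      U * mconj (X * Y) * Uᴴ = (U * mconj X * Uᴴ) * (U * mconj Y * Uᴴ) := by
    intro X Y
    rw [mconj_mul]
    calc U * (mconj X * mconj Y) * Uᴴ
        = U * mconj X * (Uᴴ * U) * mconj Y * Uᴴ := by rw [h1]; noncomm_ring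
      _ = (U * mconj X * Uᴴ) * (U * mconj Y * Uᴴ) := by noncomm_ring
  -- φ(Mᴴ) = M
  have hMH : U * mconj (Mᴴ) * Uᴴ = M := by
    rw [mconj_conjTranspose]
    have : (U * mconj M * Uᴴ)ᴴ = (Mᴴ)ᴴ := by rw [hM]
    simpa [Matrix.conjTranspose_mul, mul_assoc] using this
  have hMQMHQ : U * mconj (M * Q * Mᴴ * Q) * Uᴴ = Mᴴ * Q * M * Q := by
    rw [hmul, hmul, hmul, hM, hQ, hMH]
  have hMHQMQ : U * mconj (Mᴴ * Q * M * Q) * Uᴴ = M * Q * Mᴴ * Q := by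
    rw [hmul, hmul, hmul, hM, hQ, hMH]
  have hplus : U * mconj ((2 : ℂ)⁻¹ • ((1 : Matrix (Fin n) (Fin n) ℂ) + C)) * Uᴴ
      = (2 : ℂ)⁻¹ • ((1 : Matrix (Fin n) (Fin n) ℂ) - C) := by
    rw [mconj_smul, mconj_add, mconj_one]
    have hc2 : starRingEnd ℂ (2⁻¹ : ℂ) = (2⁻¹ : ℂ) := by
      rw [map_inv₀]; norm_num [Complex.ext_iff]
    rw [hc2, Matrix.mul_smul, Matrix.smul_mul]
    congr 1
    have hone : U * (1 : Matrix (Fin n) (Fin n) ℂ) * Uᴴ = 1 := by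
      simpa [Matrix.star_eq_conjTranspose] using hU.2
    calc U * ((1 : Matrix (Fin n) (Fin n) ℂ) + mconj C) * Uᴴ
        = U * (1 : Matrix (Fin n) (Fin n) ℂ) * Uᴴ + U * mconj C * Uᴴ := by noncomm_ring
      _ = 1 + -C := by rw [hone, hC]
      _ = 1 - C := by rw [sub_eq_add_neg]
  have hminus : U * mconj ((2 : ℂ)⁻¹ • ((1 : Matrix (Fin n) (Fin n) ℂ) - C)) * Uᴴ
      = (2 : ℂ)⁻¹ • ((1 : Matrix (Fin n) (Fin n) ℂ) + C) := by
    rw [mconj_smul]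
    have hc2 : starRingEnd ℂ (2⁻¹ : ℂ) = (2⁻¹ : ℂ) := by
      rw [map_inv₀]; norm_num [Complex.ext_iff]
    rw [hc2, Matrix.mul_smul, Matrix.smul_mul]
    congr 1
    have hone : U * (1 : Matrix (Fin n) (Fin n) ℂ) * Uᴴ = 1 := by
      simpa [Matrix.star_eq_conjTranspose] using hU.2
    have hsub : mconj ((1 : Matrix (Fin n) (Fin n) ℂ) - C) = 1 - mconj C := by
      ext i j; simp [mconj, Matrix.one_apply]
    rw [hsub]
    calc U * ((1 : Matrix (Fin n) (Fin n) ℂ) - mconj C) * Uᴴ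
        = U * (1 : Matrix (Fin n) (Fin n) ℂ) * Uᴴ - U * mconj C * Uᴴ := by noncomm_ring
      _ = 1 - -C := by rw [hone, hC]
      _ = 1 + C := by rw [sub_neg_eq_add]
  subst hΞ
  rw [mconj_add, Matrix.mul_add, Matrix.add_mul,
    hmul ((2 : ℂ)⁻¹ • ((1 : Matrix (Fin n) (Fin n) ℂ) + C)) (M * Q * Mᴴ * Q),
    hmul ((2 : ℂ)⁻¹ • ((1 : Matrix (Fin n) (Fin n) ℂ) - C)) (Mᴴ * Q * M * Q),
    hplus, hminus, hMQMHQ, hMHQMQ, add_comm]
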